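/- Under the growth and nondegeneracy hypotheses of the previous statement, there exists a constant c' > 0 (depending only on c, C, α, n) such that for every x ∈ {u > 0} and admissible radius κ, the Lebesgue measure satisfies ℒⁿ(B_κ(x) ∩ {u>0}) ≥ c' ℒⁿ(B_κ(x)). -/

import Mathlib

open Metric MeasureTheory

section Aux
open Set

lemma hits_frontier {E : Type*} [NormedAddCommGroup E] [NormedSpace ℝ E]
    (u : E → ℝ) (hu : Continuous u) (a b : E) (ha : 0 < u a) (hb : ¬ 0 < u b) :
    ∃ z ∈ segment ℝ a b, z ∈ frontier {y | 0 < u y} := by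
  set f : ℝ → E := fun t => a + t • (b - a) with hf
  have hfc : Continuous f := by fun_prop
  have hseg : ∀ t ∈ Icc (0:ℝ) 1, f t ∈ segment ℝ a b := by
    intro t ht
    rw [segment_eq_image']
    exact ⟨t, ht, rfl⟩
  set S : Set ℝ := Icc (0:ℝ) 1 ∩ {t | u (f t) ≤ 0} with hS
  have hSc : IsClosed S := isClosed_Icc.inter (isClosed_le (hu.comp hfc) continuous_const)
  have h1S : (1:ℝ) ∈ S := by
    constructor
    · exact ⟨zero_le_one, le_refl 1⟩
    · show u (f 1) ≤ 0
      have : f 1 = b := by simp [hf]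
      rw [this]; linarith [not_lt.mp hb]
  have hne : S.Nonempty := ⟨1, h1S⟩
  have hbdd : BddBelow S := ⟨0, fun t ht => ht.1.1⟩
  set t₀ := sInf S with ht₀
  have ht₀S : t₀ ∈ S := hSc.csInf_mem hne hbdd
  have ht₀pos : 0 < t₀ := by
    rcases lt_or_eq_of_le ht₀S.1.1 with h | h
    · exact h
    · exfalso
      have : u (f t₀) ≤ 0 := ht₀S.2
      rw [← h] at this
      have : f 0 = a := by simp [hf]
      have := ht₀S.2
      rw [← h] at this
      simp only [hf] at this
      simp at this
      linarith
  have hlt : ∀ t ∈ Ico (0:ℝ) t₀, 0 < u (f t) := by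
    intro t ht
    by_contra h
    have : t ∈ S := ⟨⟨ht.1, ht.2.le.trans ht₀S.1.2⟩, not_lt.mp h⟩
    exact absurd (csInf_le hbdd this) (not_le.mpr ht.2)
  refine ⟨f t₀, hseg t₀ ht₀S.1, ?_, ?_⟩
  · -- in closure
    have h1 : f t₀ ∈ f '' (closure (Ico (0:ℝ) t₀)) := by
      rw [closure_Ico (ne_of_lt ht₀pos)]
      exact ⟨t₀, ⟨ht₀S.1.1, le_refl _⟩, rfl⟩
    have h2 : f '' (closure (Ico (0:ℝ) t₀)) ⊆ closure (f '' (Ico (0:ℝ) t₀)) :=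
      image_closure_subset_closure_image hfc
    refine closure_mono ?_ (h2 h1)
    rintro _ ⟨t, ht, rfl⟩
    exact hlt t ht
  · -- not in interior
    intro h
    have := interior_subset h
    simp only [mem_setOf_eq] at this
    exact absurd this (not_lt.mpr ht₀S.2)

end Aux

open Set in
theorem stmt_14 {n : ℕ} (Ω : Set (EuclideanSpace ℝ (Fin n))) (hΩ : IsOpen Ω)
    (u : EuclideanSpace ℝ (Fin n) → ℝ) (hu : Continuous u) (hpos : ∀ x, 0 ≤ u x)
    (c C α : ℝ) (hc : 0 < c) (hcC : c ≤ C) (hα : 0 < α)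
    (hgrowth : ∀ z ∈ frontier {y | 0 < u y} ∩ Ω, ∀ d : ℝ, 0 < d →
      closedBall z d ⊆ Ω → ∀ y ∈ ball z d, u y ≤ C * d ^ α)
    (hnd : ∀ x, 0 < u x → ∀ κ : ℝ, 0 < κ → closedBall x (2 * κ) ⊆ Ω →
      ∃ z₀ ∈ closedBall x κ, c * κ ^ α ≤ u z₀) :
    ∃ c' : ℝ, 0 < c' ∧ ∀ x : EuclideanSpace ℝ (Fin n), 0 < u x →
      ∀ κ : ℝ, 0 < κ → closedBall x (2 * κ) ⊆ Ω →
        ENNReal.ofReal c' * volume (ball x κ) ≤ volume (ball x κ ∩ {y | 0 < u y}) := by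
  have hC : 0 < C := lt_of_lt_of_le hc hcC
  set τ : ℝ := (c / C) ^ (1 / α) / 2 with hτdef
  have hτ0 : 0 < τ := by
    apply div_pos _ two_pos
    exact Real.rpow_pos_of_pos (div_pos hc hC) _
  have hcC1 : c / C ≤ 1 := div_le_one_of_le₀ hcC hC.le
  have hτhalf : τ ≤ 1 / 2 := by
    have : (c / C) ^ (1 / α) ≤ 1 :=
      Real.rpow_le_one (div_pos hc hC).le hcC1 (by positivity)
    rw [hτdef]; linarith
  have hτα : C * τ ^ α = c / 2 ^ α := by
    rw [hτdef, Real.div_rpow (Real.rpow_pos_of_pos (div_pos hc hC) _).le (by norm_num : (0:ℝ) ≤ 2),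
      ← Real.rpow_mul (div_pos hc hC).le, one_div_mul_cancel hα.ne', Real.rpow_one]
    field_simp
  refine ⟨(τ / 2) ^ n, by positivity, ?_⟩
  intro x hx κ hκ hΩsub
  obtain ⟨z₀, hz₀mem, hz₀⟩ := hnd x hx κ hκ hΩsub
  have hdistxz : dist x z₀ ≤ κ := by
    rw [dist_comm]; exact mem_closedBall.mp hz₀mem
  -- the small ball is inside Ω
  have hballΩ : ∀ w ∈ closedBall z₀ (2 * (τ * κ)), w ∈ Ω := by
    intro w hw
    apply hΩsub
    rw [mem_closedBall] at hw ⊢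
    have : dist w x ≤ dist w z₀ + dist z₀ x := dist_triangle _ _ _
    rw [dist_comm z₀ x] at this
    nlinarith
  -- key claim: ball z₀ (τκ) ⊆ {u > 0}
  have hball : ball z₀ (τ * κ) ⊆ {y | 0 < u y} := by
    intro y hy
    by_contra hyneg
    have hz₀pos : 0 < u z₀ := lt_of_lt_of_le (by positivity) hz₀
    obtain ⟨z, hzseg, hzfr⟩ := hits_frontier u hu z₀ y hz₀pos hyneg
    have hzball : z ∈ ball z₀ (τ * κ) := by
      have hconv : Convex ℝ (ball z₀ (τ * κ)) := convex_ball _ _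
      exact hconv.segment_subset (mem_ball_self (by positivity)) hy hzseg
    have hzd : dist z z₀ < τ * κ := mem_ball.mp hzball
    set d : ℝ := (dist z z₀ + τ * κ) / 2 with hd
    have hd0 : 0 < d := by positivity
    have hd1 : dist z z₀ < d := by rw [hd]; linarith
    have hd2 : d < τ * κ := by rw [hd]; linarith
    have hsub : closedBall z d ⊆ Ω := by
      intro w hw
      apply hballΩ
      rw [mem_closedBall] at hw ⊢
      have : dist w z₀ ≤ dist w z + dist z z₀ := dist_triangle _ _ _
      linarith
    have hgz := hgrowth z ⟨hzfr, hballΩ z (by rw [mem_closedBall]; nlinarith)⟩ d hd0 hsub z₀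
      (by rw [mem_ball, dist_comm]; exact hd1)
    have hlt : C * d ^ α < C * (τ * κ) ^ α := by
      apply mul_lt_mul_of_pos_left _ hC
      exact Real.rpow_lt_rpow hd0.le hd2 hα
    have heq : C * (τ * κ) ^ α = (c / 2 ^ α) * κ ^ α := by
      rw [Real.mul_rpow hτ0.le hκ.le, ← mul_assoc, hτα]
    have h2α : (1:ℝ) ≤ 2 ^ α := Real.one_le_rpow (by norm_num) hα.le
    have hκα : 0 < κ ^ α := Real.rpow_pos_of_pos hκ _
    have : (c / 2 ^ α) * κ ^ α ≤ c * κ ^ α := by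
      apply mul_le_mul_of_nonneg_right _ hκα.le
      rw [div_le_iff₀ (by linarith)]
      nlinarith
    linarith
  -- find a small ball inside both
  have hτκ2 : 0 < τ * κ / 2 := by positivity
  obtain ⟨m, hm⟩ : ∃ m, ball m (τ * κ / 2) ⊆ ball x κ ∩ ball z₀ (τ * κ) := by
    by_cases h : dist x z₀ ≤ τ * κ / 2
    · refine ⟨x, subset_inter ?_ ?_⟩
      · exact ball_subset_ball (by nlinarith)
      · exact ball_subset_ball' (by linarith)
    · push_neg at h
      set d₀ := dist x z₀ with hd₀
      have hd₀0 : 0 < d₀ := lt_trans hτκ2 h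
      set t : ℝ := τ * κ / (2 * d₀) with ht
      have ht0 : 0 < t := by positivity
      have ht1 : t < 1 := by
        rw [ht, div_lt_one (by positivity)]; linarith
      refine ⟨z₀ + t • (x - z₀), subset_inter ?_ ?_⟩
      · apply ball_subset_ball'
        have : dist (z₀ + t • (x - z₀)) x = (1 - t) * d₀ := by
          rw [dist_eq_norm]
          have : z₀ + t • (x - z₀) - x = -((1 - t) • (x - z₀)) := by
            module
          rw [this, norm_neg, norm_smul, Real.norm_eq_abs, abs_of_pos (by linarith)]
          rw [hd₀, dist_eq_norm]
        rw [this]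
        have : (1 - t) * d₀ = d₀ - τ * κ / 2 := by
          rw [ht]; field_simp
        rw [this]; linarith
      · apply ball_subset_ball'
        have : dist (z₀ + t • (x - z₀)) z₀ = t * d₀ := by
          rw [dist_eq_norm]
          have : z₀ + t • (x - z₀) - z₀ = t • (x - z₀) := by module
          rw [this, norm_smul, Real.norm_eq_abs, abs_of_pos ht0, hd₀, dist_eq_norm]
        rw [this]
        have : t * d₀ = τ * κ / 2 := by rw [ht]; field_simp
        rw [this]; linarith
  -- measure computation
  have hsub2 : ball m (τ * κ / 2) ⊆ ball x κ ∩ {y | 0 < u y} :=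
    hm.trans (inter_subset_inter_right _ hball)
  calc ENNReal.ofReal ((τ / 2) ^ n) * volume (ball x κ)
      = ENNReal.ofReal ((τ / 2) ^ n) *
        (ENNReal.ofReal (κ ^ n) * volume (ball (0 : EuclideanSpace ℝ (Fin n)) 1)) := by
        rw [Measure.addHaar_ball_of_pos volume x hκ, finrank_euclideanSpace_fin]
    _ = ENNReal.ofReal ((τ * κ / 2) ^ n) * volume (ball (0 : EuclideanSpace ℝ (Fin n)) 1) := by
        rw [← mul_assoc, ← ENNReal.ofReal_mul (by positivity), ← mul_pow]
        ring_nf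
    _ = volume (ball m (τ * κ / 2)) := by
        rw [Measure.addHaar_ball_of_pos volume m hτκ2, finrank_euclideanSpace_fin]
    _ ≤ volume (ball x κ ∩ {y | 0 < u y}) := measure_mono hsub2
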